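/- Let λ ∈ (0,1), m, n ∈ ℝ, and u ∈ (0,1), and set F = (1+λ)u − λu² (which lies in (0,1)). Then F^m (1−F)^n = Σ_{i=0}^∞ (−1)^i C(n,i) · Σ_{j=0}^∞ (−1)^j C(m+i, j) λ^j (1+λ)^{m+i−j} u^{j+m+i} (iterated sums; both series converge). With u = (1 − exp(−β g(x)^α))^θ this gives the expansion of the integrand F(x)^m (1−F(x))^n of the cumulative information generating function of the GTLD. -/

import Mathlib

open Real

/-- Generalized binomial coefficient `C(a,k) = a(a−1)⋯(a−k+1)/k!`. -/
noncomputable def genChoose (a : ℝ) (k : ℕ) : ℝ :=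
  (∏ i ∈ Finset.range k, (a - i)) / (Nat.factorial k)


lemma genChoose_zero (a : ℝ) : genChoose a 0 = 1 := by
  simp [genChoose]

lemma genChoose_succ (a : ℝ) (k : ℕ) :
    ((k : ℝ) + 1) * genChoose a (k + 1) = (a - k) * genChoose a k := by
  have h1 : (Nat.factorial k : ℝ) ≠ 0 := Nat.cast_ne_zero.2 (Nat.factorial_ne_zero k)
  have h2 : ((k : ℝ) + 1) ≠ 0 := by positivity
  simp only [genChoose, Finset.prod_range_succ, Nat.factorial_succ]
  push_cast
  field_simp

/-- Summability of `k * |C(a,k)| * s^k` for `0 ≤ s < 1`. -/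
lemma summable_k_genChoose (a : ℝ) {s : ℝ} (hs0 : 0 ≤ s) (hs1 : s < 1) :
    Summable (fun k : ℕ => (k : ℝ) * |genChoose a k| * s ^ k) := by
  set r : ℝ := (1 + s) / 2 with hr
  have hsr : s < r := by simp [hr]; linarith
  have hr1 : r < 1 := by simp [hr]; linarith
  apply summable_of_ratio_norm_eventually_le hr1
  have hK : ∀ᶠ k : ℕ in Filter.atTop, |a| * s ≤ (r - s) * k := by
    have := tendsto_natCast_atTop_atTop (R := ℝ)
    filter_upwards [this.eventually_ge_atTop (|a| * s / (r - s))] with k hk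
    have hrs : 0 < r - s := by linarith
    rw [div_le_iff₀ hrs] at hk
    linarith [hk]
  filter_upwards [hK] with k hk
  have key : ((k : ℝ) + 1) * |genChoose a (k + 1)| = |a - k| * |genChoose a k| := by
    calc ((k : ℝ) + 1) * |genChoose a (k + 1)|
        = |((k : ℝ) + 1) * genChoose a (k + 1)| := by
          rw [abs_mul, abs_of_nonneg (by positivity : (0:ℝ) ≤ (k:ℝ)+1)]
      _ = |(a - k) * genChoose a k| := by rw [genChoose_succ a k]
      _ = |a - k| * |genChoose a k| := abs_mul _ _
  have hnn : ∀ j : ℕ, (0:ℝ) ≤ (j : ℝ) * |genChoose a j| * s ^ j := by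
    intro j; positivity
  rw [Real.norm_eq_abs, Real.norm_eq_abs, abs_of_nonneg (hnn _), abs_of_nonneg (hnn _)]
  push_cast
  calc ((k : ℝ) + 1) * |genChoose a (k+1)| * s ^ (k+1)
      = |a - k| * |genChoose a k| * (s ^ k * s) := by rw [key]; ring
    _ ≤ (r * k) * |genChoose a k| * s ^ k := by
        have h1 : |a - k| * s ≤ r * k := by
          have : |a - k| ≤ |a| + k := by
            calc |a - k| ≤ |a| + |(k:ℝ)| := abs_sub _ _
              _ = |a| + k := by rw [abs_of_nonneg (by positivity : (0:ℝ) ≤ (k:ℝ))]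
          nlinarith [abs_nonneg a, Nat.cast_nonneg (α := ℝ) k]
        have h2 : (0:ℝ) ≤ |genChoose a k| * s ^ k := by positivity
        nlinarith [h2, pow_nonneg hs0 k, abs_nonneg (genChoose a k)]
    _ = r * ((k : ℝ) * |genChoose a k| * s ^ k) := by ring

lemma summable_genChoose_mul_pow (a : ℝ) {x : ℝ} (hx : |x| < 1) :
    Summable (fun k : ℕ => genChoose a k * x ^ k) := by
  have h := summable_k_genChoose a (abs_nonneg x) hx
  apply Summable.of_norm_bounded_eventually_nat (g := fun k : ℕ => (k : ℝ) * |genChoose a k| * |x| ^ k) h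
  filter_upwards [Filter.eventually_ge_atTop 1] with k hk
  rw [Real.norm_eq_abs, abs_mul, abs_pow]
  have h1 : (1:ℝ) ≤ (k : ℝ) := by exact_mod_cast hk
  have h2 : (0:ℝ) ≤ |genChoose a k| * |x| ^ k := by positivity
  nlinarith [h1, h2]

theorem hasSum_binomial (a x : ℝ) (hx : |x| < 1) :
    HasSum (fun k : ℕ => genChoose a k * x ^ k) ((1 + x) ^ a) := by
  set f : ℝ → ℝ := fun y => ∑' k : ℕ, genChoose a k * y ^ k with hf
  have hsum : ∀ y : ℝ, |y| < 1 → HasSum (fun k : ℕ => genChoose a k * y ^ k) (f y) :=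
    fun y hy => (summable_genChoose_mul_pow a hy).hasSum
  -- summability of the derivative series
  have hdsum : ∀ y : ℝ, |y| < 1 →
      Summable (fun k : ℕ => (k : ℝ) * genChoose a k * y ^ (k - 1)) := by
    intro y hy
    rcases eq_or_ne y 0 with rfl | hy0
    · apply summable_of_ne_finset_zero (s := {0, 1})
      intro k hk
      simp only [Finset.mem_insert, Finset.mem_singleton] at hk
      push_neg at hk
      have h1 : k - 1 ≠ 0 := by omega
      simp [zero_pow h1]
    · have h := (summable_k_genChoose a (abs_nonneg y) hy).mul_left |y|⁻¹
      apply Summable.of_norm_bounded h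
      intro k
      have h0 : |y| ≠ 0 := abs_ne_zero.2 hy0
      rw [Real.norm_eq_abs, abs_mul, abs_mul, abs_pow,
        abs_of_nonneg (Nat.cast_nonneg (α := ℝ) k)]
      rcases Nat.eq_zero_or_pos k with rfl | hk
      · simp
      have h2 : |y| ^ (k - 1) = |y| ^ k / |y| ^ 1 := pow_sub₀ |y| h0 hk
      rw [h2, pow_one]
      rw [div_eq_mul_inv]
      ring_nf
      exact le_rfl
  -- derivative of f
  have hderiv : ∀ y : ℝ, |y| < 1 →
      HasDerivAt f (∑' k : ℕ, (k : ℝ) * genChoose a k * y ^ (k - 1)) y := by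
    intro y hy
    set r : ℝ := (1 + |y|) / 2 with hrdef
    have hy0 : 0 ≤ |y| := abs_nonneg y
    have hr0 : 0 < r := by rw [hrdef]; linarith
    have hyr : |y| < r := by rw [hrdef]; linarith
    have hr1 : r < 1 := by rw [hrdef]; linarith
    have husum : Summable (fun k : ℕ => r⁻¹ * ((k : ℝ) * |genChoose a k| * r ^ k)) :=
      (summable_k_genChoose a hr0.le hr1).mul_left r⁻¹
    have hball : y ∈ Metric.ball (0 : ℝ) r := by simpa [Real.dist_eq] using hyr
    exact hasDerivAt_tsum_of_isPreconnected
      (g := fun (n : ℕ) (z : ℝ) => genChoose a n * z ^ n)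
      (g' := fun (n : ℕ) (z : ℝ) => (n : ℝ) * genChoose a n * z ^ (n - 1))
      husum Metric.isOpen_ball
      (convex_ball (0:ℝ) r).isPreconnected
      (fun n z _ => by
        have h := (hasDerivAt_pow n z).const_mul (genChoose a n)
        convert h using 1
        · rfl
        ring)
      (fun n z hz => by
        have hzr : |z| < r := by simpa [Real.dist_eq] using hz
        rw [Real.norm_eq_abs, abs_mul, abs_mul, abs_pow,
          abs_of_nonneg (Nat.cast_nonneg (α := ℝ) n)]
        rcases Nat.eq_zero_or_pos n with rfl | hn
        · simp
        have h1 : |z| ^ (n - 1) ≤ r ^ (n - 1) :=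
          pow_le_pow_left₀ (abs_nonneg z) hzr.le _
        have h2 : r ^ (n - 1) = r ^ n * r⁻¹ := by
          rw [pow_sub₀ r (ne_of_gt hr0) hn, pow_one]
          try ring
        calc (n : ℝ) * |genChoose a n| * |z| ^ (n - 1)
            ≤ (n : ℝ) * |genChoose a n| * r ^ (n - 1) := by
              have h3 : (0:ℝ) ≤ (n : ℝ) * |genChoose a n| := by positivity
              nlinarith
          _ = r⁻¹ * ((n : ℝ) * |genChoose a n| * r ^ n) := by rw [h2]; ring)
      (Metric.mem_ball_self (by simpa using hr0))
      (summable_genChoose_mul_pow a (by norm_num : |(0:ℝ)| < 1))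
      hball
  -- the ODE identity (1+y) f'(y) = a f(y)
  have hODE : ∀ y : ℝ, |y| < 1 →
      (1 + y) * (∑' k : ℕ, (k : ℝ) * genChoose a k * y ^ (k - 1)) = a * f y := by
    intro y hy
    set s := ∑' k : ℕ, (k : ℝ) * genChoose a k * y ^ (k - 1) with hs
    have H : HasSum (fun k : ℕ => (k : ℝ) * genChoose a k * y ^ (k - 1)) s :=
      (hdsum y hy).hasSum
    have H1 : HasSum (fun k : ℕ => ((k : ℝ) + 1) * genChoose a (k + 1) * y ^ k) s := by
      have h6 : HasSum (fun k : ℕ => (k : ℝ) * genChoose a k * y ^ (k - 1))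
          (s + ∑ i ∈ Finset.range 1, (i : ℝ) * genChoose a i * y ^ (i - 1)) := by
        simpa using H
      have h7 := (hasSum_nat_add_iff
        (f := fun k : ℕ => (k : ℝ) * genChoose a k * y ^ (k - 1)) 1).mpr h6
      convert h7 using 2 with k
      · rfl
      push_cast
      simp
    have h3 : HasSum (fun k : ℕ =>
        ((k + 1 : ℕ) : ℝ) * genChoose a (k + 1) * y ^ (k + 1)) (y * s) := by
      have h4 := H1.mul_left y
      convert h4 using 2 with k
      · rfl
      push_cast
      ring
    have H2 : HasSum (fun k : ℕ => (k : ℝ) * genChoose a k * y ^ k) (y * s) := by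
      have h5 := (hasSum_nat_add_iff (f := fun k : ℕ => (k : ℝ) * genChoose a k * y ^ k) 1).mp h3
      simpa using h5
    have H3 := H1.add H2
    have e : (fun k : ℕ => ((k : ℝ) + 1) * genChoose a (k + 1) * y ^ k +
        (k : ℝ) * genChoose a k * y ^ k) = fun k : ℕ => a * (genChoose a k * y ^ k) := by
      funext k
      have h := genChoose_succ a k
      linear_combination y ^ k * h
    rw [e] at H3
    have H4 := (hsum y hy).mul_left a
    calc (1 + y) * s = s + y * s := by ring
      _ = a * f y := H3.unique H4
  -- the function f y * (1+y)^(-a) has zero derivative on (-1,1)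
  set G : ℝ → ℝ := fun y => f y * (1 + y) ^ (-a) with hG
  have hG' : ∀ y ∈ Set.Ioo (-1 : ℝ) 1, HasDerivAt G 0 y := by
    intro y hy
    have hy1 : 0 < 1 + y := by linarith [hy.1]
    have habs : |y| < 1 := abs_lt.2 ⟨hy.1, hy.2⟩
    have h1 := hderiv y habs
    have h2 : HasDerivAt (fun z : ℝ => (1 + z) ^ (-a)) (-a * (1 + y) ^ (-a - 1) * 1) y := by
      have h4 : HasDerivAt (fun z : ℝ => 1 + z) 1 y := by
        simpa using (hasDerivAt_id y).const_add 1
      exact (Real.hasDerivAt_rpow_const (x := 1 + y) (p := -a)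
        (Or.inl (ne_of_gt hy1))).comp y h4
    have h5 := h1.mul h2
    convert h5 using 1
    · rfl
    · rfl
    · rfl
    have hc : (1 + y) ^ (-a) = (1 + y) ^ (-a - 1) * (1 + y) := by
      rw [← Real.rpow_add_one (ne_of_gt hy1) (-a - 1)]
      norm_num
    have hid := hODE y habs
    rw [hc]
    linear_combination (-((1 + y) ^ (-a - 1))) * hid
  -- constancy
  have hG0 : G 0 = 1 := by
    have hf0 : f 0 = 1 := by
      have he : f 0 = ∑' k : ℕ, genChoose a k * (0:ℝ) ^ k := rfl
      rw [he, tsum_eq_single 0 (fun b hb => by simp [zero_pow hb])]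
      simp [genChoose_zero]
    simp [hG, hf0]
  have hGx : G x = 1 := by
    rcases le_or_gt 0 x with hx0 | hx0
    · have := constant_of_has_deriv_right_zero (f := G) (a := 0) (b := x)
        (fun z hz => by
          have hz1 : z ∈ Set.Ioo (-1 : ℝ) 1 := ⟨by linarith [hz.1], lt_of_le_of_lt hz.2 (abs_lt.1 hx).2⟩
          exact (hG' z hz1).continuousAt.continuousWithinAt)
        (fun z hz => by
          have hz1 : z ∈ Set.Ioo (-1 : ℝ) 1 := ⟨by linarith [hz.1], lt_of_lt_of_le hz.2 (le_of_lt (abs_lt.1 hx).2)⟩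
          exact (hG' z hz1).hasDerivWithinAt)
        x (Set.right_mem_Icc.2 hx0)
      rw [this, hG0]
    · have := constant_of_has_deriv_right_zero (f := G) (a := x) (b := 0)
        (fun z hz => by
          have hz1 : z ∈ Set.Ioo (-1 : ℝ) 1 := ⟨lt_of_lt_of_le (abs_lt.1 hx).1 hz.1, by linarith [hz.2]⟩
          exact (hG' z hz1).continuousAt.continuousWithinAt)
        (fun z hz => by
          have hz1 : z ∈ Set.Ioo (-1 : ℝ) 1 := ⟨lt_of_lt_of_le (abs_lt.1 hx).1 hz.1, by linarith [hz.2]⟩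
          exact (hG' z hz1).hasDerivWithinAt)
        0 (Set.right_mem_Icc.2 hx0.le)
      rw [← hG0, this]
  -- conclude
  have h1x : 0 < 1 + x := by linarith [(abs_lt.1 hx).1]
  have hfin : f x = (1 + x) ^ a := by
    have h6 : f x * (1 + x) ^ (-a) = 1 := hGx
    rw [Real.rpow_neg h1x.le] at h6
    have hpos : (0:ℝ) < (1 + x) ^ a := Real.rpow_pos_of_pos h1x a
    field_simp at h6
    linarith [h6]
  rw [← hfin]
  exact hsum x hx

/-- Expansion of the integrand of the cumulative information generating
function of the GTLD: for `λ ∈ (0,1)`, `m n ∈ ℝ`, `u ∈ (0,1)` and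
`F = (1+λ)u − λu²`, we have `F ∈ (0,1)` and
`F^m (1−F)^n = Σ_i (−1)^i C(n,i) Σ_j (−1)^j C(m+i,j) λ^j (1+λ)^{m+i−j} u^{j+m+i}`,
with both series convergent. -/
theorem gtld_cigf_expansion (lam m n u F : ℝ)
    (hlam : lam ∈ Set.Ioo (0 : ℝ) 1) (hu : u ∈ Set.Ioo (0 : ℝ) 1)
    (hF : F = (1 + lam) * u - lam * u ^ 2) :
    F ∈ Set.Ioo (0 : ℝ) 1 ∧
      (∀ i : ℕ,
        Summable (fun j : ℕ =>
          (-1 : ℝ) ^ j * genChoose (m + (i : ℝ)) j * lam ^ j *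
            (1 + lam) ^ (m + (i : ℝ) - (j : ℝ)) * u ^ ((j : ℝ) + m + (i : ℝ)))) ∧
      HasSum
        (fun i : ℕ =>
          (-1 : ℝ) ^ i * genChoose n i *
            ∑' j : ℕ,
              (-1 : ℝ) ^ j * genChoose (m + (i : ℝ)) j * lam ^ j *
                (1 + lam) ^ (m + (i : ℝ) - (j : ℝ)) * u ^ ((j : ℝ) + m + (i : ℝ)))
        (F ^ m * (1 - F) ^ n) := by
  obtain ⟨hl0, hl1⟩ := hlam
  obtain ⟨hu0, hu1⟩ := hu
  have hl1' : 0 < 1 + lam := by linarith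
  have hF0 : 0 < F := by rw [hF]; nlinarith
  have hlu : lam * u < 1 := by nlinarith
  have hF1 : F < 1 := by
    rw [hF]; nlinarith [mul_pos (sub_pos.2 hu1) (sub_pos.2 hlu)]
  have hFmem : F ∈ Set.Ioo (0 : ℝ) 1 := ⟨hF0, hF1⟩
  -- the inner expansion
  have hxin : 0 < lam * u / (1 + lam) := by positivity
  have hxin1 : lam * u / (1 + lam) < 1 := by
    rw [div_lt_one hl1']; nlinarith
  have Hinner : ∀ i : ℕ,
      HasSum (fun j : ℕ =>
        (-1 : ℝ) ^ j * genChoose (m + (i : ℝ)) j * lam ^ j *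
          (1 + lam) ^ (m + (i : ℝ) - (j : ℝ)) * u ^ ((j : ℝ) + m + (i : ℝ)))
        (F ^ (m + (i : ℝ))) := by
    intro i
    set c : ℝ := m + (i : ℝ) with hc
    set x : ℝ := -(lam * u / (1 + lam)) with hxdef
    have hxabs : |x| < 1 := by
      rw [hxdef, abs_neg, abs_of_pos hxin]; exact hxin1
    have H0 := (hasSum_binomial c x hxabs).mul_right (((1 + lam) * u) ^ c)
    have hRHS : (1 + x) ^ c * ((1 + lam) * u) ^ c = F ^ c := by
      rw [← Real.mul_rpow (by rw [hxdef]; nlinarith [hxin1] : (0:ℝ) ≤ 1 + x)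
        (by positivity : (0:ℝ) ≤ (1 + lam) * u)]
      congr 1
      rw [hxdef, hF]
      field_simp
      ring
    rw [hRHS] at H0
    refine H0.congr_fun fun j => ?_
    have hne : ((1:ℝ) + lam) ^ (j:ℕ) ≠ 0 := pow_ne_zero _ (ne_of_gt hl1')
    have hujc : u ^ ((j:ℝ) + m + (i:ℝ)) = u ^ (j:ℕ) * u ^ c := by
      rw [show (j:ℝ) + m + (i:ℝ) = (j:ℝ) + c by rw [hc]; ring,
        Real.rpow_add hu0, Real.rpow_natCast]
    have hlc : (1 + lam) ^ (c - (j:ℝ)) = (1 + lam) ^ c / (1 + lam) ^ (j:ℕ) := by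
      rw [Real.rpow_sub hl1', Real.rpow_natCast]
    have hmul : ((1 + lam) * u) ^ c = (1 + lam) ^ c * u ^ c :=
      Real.mul_rpow hl1'.le hu0.le
    rw [hujc, hlc, hmul, hxdef]
    field_simp
    rw [neg_pow (lam * u / (1 + lam)), div_pow]
    field_simp
    ring
  refine ⟨hFmem, fun i => (Hinner i).summable, ?_⟩
  have hFabs : |(-F)| < 1 := by rw [abs_neg, abs_of_pos hF0]; exact hF1
  have Hout := (hasSum_binomial n (-F) hFabs).mul_left (F ^ m)
  have h1F : (1 : ℝ) + -F = 1 - F := by ring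
  rw [h1F] at Hout
  refine Hout.congr_fun fun i => ?_
  rw [(Hinner i).tsum_eq]
  have hFi : F ^ (m + (i : ℝ)) = F ^ m * F ^ (i : ℕ) := by
    rw [Real.rpow_add hF0, Real.rpow_natCast]
  rw [hFi]
  have hnegF : (-F) ^ (i : ℕ) = (-1 : ℝ) ^ i * F ^ i := by
    rw [neg_pow]
  rw [hnegF]
  ring
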